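/- Let r = (R_j)_{j≥1} be a generic sequence of radii, c ∈ C(r), and j ≥ 1. Then for every z ∈ ℂ_p with |z| < R_j, |∂_j f_c(z)| = |z|·|f_c(z)|/R_j², where ∂_j f_c(z) denotes the derivative at t = c_j of the function t ↦ f_{c(t)}(z), c(t) being the sequence obtained from c by replacing its j-th entry c_j with t. -/

import Mathlib

noncomputable section

/-- `K` is a model of `ℂ_p`, the completion of an algebraic closure of `ℚ_p`:
it is a complete, algebraically closed, nonarchimedean normed field whose norm
extends the `p`-adic absolute value and in which the algebraic elements over
`ℚ_p` are dense. -/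
structure IsCp (p : ℕ) [Fact p.Prime] (K : Type*) [NormedField K] [Algebra ℚ_[p] K] : Prop where
  complete : CompleteSpace K
  norm_extends : ∀ x : ℚ_[p], ‖algebraMap ℚ_[p] K x‖ = ‖x‖
  isAlgClosed : IsAlgClosed K
  dense_algebraic : Dense {x : K | IsAlgebraic ℚ_[p] x}
  isNonarch : ∀ x y : K, ‖x + y‖ ≤ max ‖x‖ ‖y‖

/-- `ϱ = p^{-1/(p-1)}`. -/
def rho (p : ℕ) : ℝ := (p : ℝ) ^ (-1 / ((p : ℝ) - 1))

/-- `R` is a sequence of radii: strictly increasing (for indices `≥ 1`),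
with `R 1 > p`, tending to infinity. -/
def IsRadii (p : ℕ) (R : ℕ → ℝ) : Prop :=
  (∀ j, 1 ≤ j → R j < R (j + 1)) ∧ (p : ℝ) < R 1 ∧
    Filter.Tendsto R Filter.atTop Filter.atTop

/-- The piecewise-monomial map `φ`: for `R_{j-1} < t ≤ R_j` (with `R_0 := 0`),
`φ(t) = p (R_1 ⋯ R_{j-1})⁻¹ t^{p+j-1}`. -/
def phi (p : ℕ) (R : ℕ → ℝ) (t : ℝ) : ℝ :=
  let j := sInf {j : ℕ | 1 ≤ j ∧ t ≤ R j}
  (p : ℝ) * (∏ i ∈ Finset.Icc 1 (j - 1), R i)⁻¹ * t ^ (p + j - 1)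

/-- A generic sequence of radii. -/
def IsGenericRadii (p : ℕ) (R : ℕ → ℝ) : Prop :=
  IsRadii p R ∧ ∀ i j n : ℕ, 1 ≤ i → i < j → 1 ≤ n → (phi p R)^[n] (R i) ≠ R j

/-- Membership in the parameter space `C(r)`: `|c_j| = R_j` for all `j ≥ 1`. -/
def InC (p : ℕ) [Fact p.Prime] {K : Type*} [NormedField K] (R : ℕ → ℝ) (c : ℕ → K) : Prop :=
  ∀ j, 1 ≤ j → ‖c j‖ = R j

/-- The transcendental entire map `f_c(z) = (z^p/p) ∏_{j ≥ 1} (1 - z/c_j)`. -/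
def fc (p : ℕ) {K : Type*} [NormedField K] (c : ℕ → K) (z : K) : K :=
  z ^ p / (p : K) * ∏' j : ℕ, (1 - z / c (j + 1))

/-- The disk `B_0 = {|z| < 1}` for `j = 0`, and `B_j = {|z - c_j| < R_j}` for `j ≥ 1`. -/
def Bset {K : Type*} [NormedField K] (R : ℕ → ℝ) (c : ℕ → K) (j : ℕ) : Set K :=
  if j = 0 then {z : K | ‖z‖ < 1} else {z : K | ‖z - c j‖ < R j}

/-- The set `A`, complement of all the disks `B_j`, `j ≥ 0`. -/
def Aset {K : Type*} [NormedField K] (R : ℕ → ℝ) (c : ℕ → K) : Set K :=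
  (⋃ j, Bset R c j)ᶜ

/-- `n_j`, the minimal `n ≥ 1` with `R_j < φ^{∘(n+1)}(1)`. -/
def nseq (p : ℕ) (R : ℕ → ℝ) (j : ℕ) : ℕ :=
  sInf {n : ℕ | 1 ≤ n ∧ R j < (phi p R)^[n + 1] 1}

/-- `S_j = φ⁻¹(R_j)`. -/
def Sse (p : ℕ) (R : ℕ → ℝ) (j : ℕ) : ℝ := Function.invFun (phi p R) (R j)

/-- `λ_j = φ(R_j)/R_j`. -/
def lam (p : ℕ) (R : ℕ → ℝ) (j : ℕ) : ℝ := phi p R (R j) / R j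

/-- `L_k`: index of the first symbol of the `k`-th block `B_0^{m_k} A^{n_k} B_k^{…}`
of the itinerary `α(m, ℓ)`; `L_1 = 0` and `L_{k+1} = L_k + m_k + n_k + ℓ_{k+1}`. -/
def Lseq (m n l : ℕ → ℕ) : ℕ → ℕ
  | 0 => 0
  | 1 => 0
  | k + 2 => Lseq m n l (k + 1) + m (k + 1) + n (k + 1) + l (k + 2)

/-- `N_k = L_k + m_k + n_k`, the index of the final symbol `B_k` of the truncated
itinerary `α^{(k)}` (so `α^{(k)}` has length `N_k + 1`). -/
def Nseq (m n l : ℕ → ℕ) (k : ℕ) : ℕ := Lseq m n l k + m k + n k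

/-- The symbol (`some 0 = B_0`, `none = A`, `some k = B_k`) at position `i` of the
itinerary `α(m,ℓ) = B_0^{m_1} A^{n_1} B_1^{ℓ_2} B_0^{m_2} A^{n_2} B_2^{ℓ_3} ⋯`. -/
def itin (m n l : ℕ → ℕ) (i : ℕ) : Option ℕ :=
  let k := sSup {k : ℕ | 1 ≤ k ∧ Lseq m n l k ≤ i}
  if i < Lseq m n l k + m k then some 0
  else if i < Lseq m n l k + m k + n k then none
  else some k

/-- The subset of `ℂ_p` corresponding to a symbol of the alphabet `{A, B_0, B_1, …}`. -/
def symbSet {K : Type*} [NormedField K] (R : ℕ → ℝ) (c : ℕ → K) : Option ℕ → Set K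
  | none => Aset R c
  | some j => Bset R c j

/-- Condition (3.2) at `k`: `ϱ⁻¹ R_k p^{-m_k} λ_k^{ℓ_{k+1}} < 1`. -/
def Cond32 (p : ℕ) (R : ℕ → ℝ) (m l : ℕ → ℕ) (k : ℕ) : Prop :=
  (rho p)⁻¹ * R k * ((p : ℝ) ^ m k)⁻¹ * lam p R k ^ l (k + 1) < 1

/-- Condition (3.3) for `k`: for all `2 ≤ j < k`,
`ε_k < ϱ^{k-j} R_k² (R_{j-1} S_{j-1})⁻¹ λ_{j-1}^{-ℓ_j}`. -/
def Cond33 (p : ℕ) (R : ℕ → ℝ) (ε : ℕ → ℝ) (l : ℕ → ℕ) (k : ℕ) : Prop :=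
  ∀ j, 2 ≤ j → j < k →
    ε k < rho p ^ (k - j) * R k ^ 2 * (R (j - 1) * Sse p R (j - 1))⁻¹ *
      (lam p R (j - 1) ^ l j)⁻¹

/-- Condition (3.4) for `k`: for all `2 ≤ j ≤ k`,
`ϱ^{-2} R_{j-1} S_{j-1} λ_{j-1}^{ℓ_j} p^{-m_j} < 1`. -/
def Cond34 (p : ℕ) (R : ℕ → ℝ) (m l : ℕ → ℕ) (k : ℕ) : Prop :=
  ∀ j, 2 ≤ j → j ≤ k →
    ((rho p) ^ 2)⁻¹ * (R (j - 1) * Sse p R (j - 1)) * lam p R (j - 1) ^ l j *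
      ((p : ℝ) ^ m j)⁻¹ < 1

/-- Condition (3.5) at `k`: `p ϱ⁻¹ R_{k+1}² S_k⁻¹ λ_k^{-ℓ_{k+1}} < ε_{k+1}`. -/
def Cond35 (p : ℕ) (R : ℕ → ℝ) (ε : ℕ → ℝ) (l : ℕ → ℕ) (k : ℕ) : Prop :=
  (p : ℝ) * (rho p)⁻¹ * R (k + 1) ^ 2 * (Sse p R k)⁻¹ * (lam p R k ^ l (k + 1))⁻¹ < ε (k + 1)

/-- `c' ∈ Δ_k(c, ε)`. -/
def InDelta (p : ℕ) [Fact p.Prime] {K : Type*} [NormedField K] (R : ℕ → ℝ) (c : ℕ → K)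
    (ε : ℕ → ℝ) (k : ℕ) (c' : ℕ → K) : Prop :=
  InC p R c' ∧ (∀ j, 1 ≤ j → j < k → c' j = c j) ∧ ∀ j, k ≤ j → ‖c' j - c j‖ < ε j

/-- `c' ∈ U_k(c, ε)`. -/
def InU (p : ℕ) [Fact p.Prime] {K : Type*} [NormedField K] (R : ℕ → ℝ) (c : ℕ → K)
    (k : ℕ) (ε : ℝ) (c' : ℕ → K) : Prop :=
  InC p R c' ∧ ‖c' k - c k‖ < ε ∧ ∀ j, 1 ≤ j → j ≠ k → c' j = c j


open Filter Topology

section Aux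

variable {K : Type*} [NormedField K]

/-- In an ultrametric field, a finite product of elements at distance `≤ ε ≤ 1` from `1`
stays at distance `≤ ε` from `1`. -/
lemma aux_prod_sub_one_le (hna : ∀ x y : K, ‖x + y‖ ≤ max ‖x‖ ‖y‖)
    {ε : ℝ} (hε0 : 0 ≤ ε) (hε1 : ε ≤ 1) (s : Finset ℕ) (f : ℕ → K)
    (h : ∀ i ∈ s, ‖f i - 1‖ ≤ ε) : ‖(∏ i ∈ s, f i) - 1‖ ≤ ε := by
  classical
  induction s using Finset.cons_induction with
  | empty => simpa using hε0
  | cons a s ha ih =>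
    have hfa : ‖f a - 1‖ ≤ ε := h a (Finset.mem_cons_self a s)
    have hP : ‖(∏ i ∈ s, f i) - 1‖ ≤ ε := ih fun i hi => h i (Finset.mem_cons_of_mem hi)
    have hfa1 : ‖f a‖ ≤ 1 := by
      have : f a = (f a - 1) + 1 := by ring
      rw [this]
      refine (hna _ _).trans ?_
      simp only [norm_one]
      exact max_le (hfa.trans hε1) le_rfl
    have key : f a * (∏ i ∈ s, f i) - 1 = f a * ((∏ i ∈ s, f i) - 1) + (f a - 1) := by ring
    rw [Finset.prod_cons, key]
    refine (hna _ _).trans (max_le ?_ hfa)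
    rw [norm_mul]
    calc ‖f a‖ * ‖(∏ i ∈ s, f i) - 1‖ ≤ 1 * ε := by
          exact mul_le_mul hfa1 hP (norm_nonneg _) zero_le_one
      _ = ε := one_mul ε

lemma aux_one_le_prod {s : Finset ℕ} {g : ℕ → ℝ} (h : ∀ i ∈ s, 1 ≤ g i) :
    1 ≤ ∏ i ∈ s, g i :=
  calc (1 : ℝ) = ∏ _i ∈ s, 1 := Finset.prod_const_one.symm
    _ ≤ ∏ i ∈ s, g i := Finset.prod_le_prod (fun i _ => zero_le_one) h

/-- In a complete ultrametric field, if `‖f n - 1‖ → 0` then `f` is multipliable. -/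
lemma aux_multipliable (hna : ∀ x y : K, ‖x + y‖ ≤ max ‖x‖ ‖y‖) [CompleteSpace K]
    {f : ℕ → K} (hf : Tendsto (fun n => ‖f n - 1‖) atTop (𝓝 0)) : Multipliable f := by
  classical
  have hcs : CauchySeq (fun s : Finset ℕ => ∏ i ∈ s, f i) := by
    rw [Metric.cauchySeq_iff']
    intro ε hε
    -- a uniform bound on all partial products
    obtain ⟨N1, hN1⟩ := (Metric.tendsto_atTop.mp hf 1 one_pos)
    have hN1' : ∀ n ≥ N1, ‖f n - 1‖ < 1 := by
      intro n hn
      have := hN1 n hn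
      rwa [Real.dist_eq, sub_zero, abs_of_nonneg (norm_nonneg _)] at this
    set C : ℝ := ∏ i ∈ Finset.range N1, max 1 ‖f i‖ with hC
    have hC1 : (1 : ℝ) ≤ C := aux_one_le_prod fun i _ => le_max_left _ _
    have hC0 : (0 : ℝ) < C := lt_of_lt_of_le one_pos hC1
    have hbound : ∀ s : Finset ℕ, ‖∏ i ∈ s, f i‖ ≤ C := by
      intro s
      rw [norm_prod, ← Finset.prod_inter_mul_prod_diff s (Finset.range N1) (fun i => ‖f i‖)]
      calc (∏ i ∈ s ∩ Finset.range N1, ‖f i‖) * ∏ i ∈ s \ Finset.range N1, ‖f i‖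
            ≤ C * 1 := by
              refine mul_le_mul ?_ ?_ (Finset.prod_nonneg fun i _ => norm_nonneg _) hC0.le
              · refine le_trans (Finset.prod_le_prod (fun i _ => norm_nonneg _)
                  (fun i _ => le_max_right 1 ‖f i‖)) ?_
                have hsub : s ∩ Finset.range N1 ⊆ Finset.range N1 := Finset.inter_subset_right
                rw [hC, ← Finset.prod_sdiff hsub]
                have h1 : (1 : ℝ) ≤ ∏ i ∈ Finset.range N1 \ (s ∩ Finset.range N1), max 1 ‖f i‖ :=
                  aux_one_le_prod fun i _ => le_max_left _ _
                have h2 : (0 : ℝ) ≤ ∏ i ∈ s ∩ Finset.range N1, max 1 ‖f i‖ :=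
                  Finset.prod_nonneg fun i _ =>
                    le_trans zero_le_one (le_max_left _ _)
                nlinarith
              · refine Finset.prod_le_one (fun i _ => norm_nonneg _) ?_
                intro i hi
                have hiN : N1 ≤ i := by
                  by_contra hlt
                  exact (Finset.mem_sdiff.mp hi).2 (Finset.mem_range.mpr (not_le.mp hlt))
                have h1 : ‖f i - 1‖ < 1 := hN1' i hiN
                have : f i = (f i - 1) + 1 := by ring
                rw [this]
                refine (hna _ _).trans ?_
                simp only [norm_one]
                exact max_le h1.le le_rfl
          _ = C := mul_one C
    -- main estimate
    set ε' : ℝ := min 1 (ε / (C + 1)) with hε'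
    have hε'0 : 0 < ε' := lt_min one_pos (div_pos hε (by linarith))
    obtain ⟨N2, hN2⟩ := (Metric.tendsto_atTop.mp hf ε' hε'0)
    have hN2' : ∀ n ≥ N2, ‖f n - 1‖ ≤ ε' := by
      intro n hn
      have := hN2 n hn
      rw [Real.dist_eq, sub_zero, abs_of_nonneg (norm_nonneg _)] at this
      exact this.le
    refine ⟨Finset.range N2, fun s hs => ?_⟩
    have hsub : Finset.range N2 ⊆ s := hs
    have hsplit : (∏ i ∈ s \ Finset.range N2, f i) * ∏ i ∈ Finset.range N2, f i
        = ∏ i ∈ s, f i := Finset.prod_sdiff hsub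
    rw [dist_eq_norm]
    have heq : (∏ i ∈ s, f i) - ∏ i ∈ Finset.range N2, f i
        = (∏ i ∈ Finset.range N2, f i) * ((∏ i ∈ s \ Finset.range N2, f i) - 1) := by
      rw [mul_sub, mul_one, mul_comm, hsplit]
    rw [heq, norm_mul]
    have htail : ‖(∏ i ∈ s \ Finset.range N2, f i) - 1‖ ≤ ε' := by
      refine aux_prod_sub_one_le hna hε'0.le (min_le_left _ _) _ _ ?_
      intro i hi
      refine hN2' i ?_
      by_contra hlt
      exact (Finset.mem_sdiff.mp hi).2 (Finset.mem_range.mpr (not_le.mp hlt))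
    calc ‖∏ i ∈ Finset.range N2, f i‖ * ‖(∏ i ∈ s \ Finset.range N2, f i) - 1‖
        ≤ C * ε' := mul_le_mul (hbound _) htail (norm_nonneg _) hC0.le
      _ ≤ C * (ε / (C + 1)) := by
          exact mul_le_mul_of_nonneg_left (min_le_right _ _) hC0.le
      _ < ε := by
          rw [mul_div_assoc']
          rw [div_lt_iff₀ (by linarith)]
          nlinarith
  obtain ⟨a, ha⟩ := cauchySeq_tendsto_of_complete hcs
  exact ⟨a, ha⟩

lemma aux_norm_one_sub (hna : ∀ x y : K, ‖x + y‖ ≤ max ‖x‖ ‖y‖) {w : K} (hw : ‖w‖ < 1) :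
    ‖1 - w‖ = 1 := by
  refine le_antisymm ?_ ?_
  · have : (1 : K) - w = 1 + (-w) := by ring
    rw [this]
    refine (hna _ _).trans ?_
    simp only [norm_one, norm_neg]
    exact max_le le_rfl hw.le
  · have h := hna (1 - w) w
    rw [sub_add_cancel, norm_one] at h
    rcases le_max_iff.mp h with h' | h'
    · exact h'
    · exact absurd h' (not_le.mpr hw)

end Aux

/-- **Proposition 5.4.** For `|z| < R_j`, the partial derivative of `f_c(z)` with respect
to the parameter `c_j` satisfies `|∂_j f_c(z)| = |z| |f_c(z)| / R_j²`. -/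
theorem partial_deriv_fc
    (p : ℕ) [Fact p.Prime] (K : Type*) [NontriviallyNormedField K] [Algebra ℚ_[p] K]
    (hK : IsCp p K) (R : ℕ → ℝ) (hR : IsGenericRadii p R)
    (c : ℕ → K) (hc : InC p R c) (j : ℕ) (hj : 1 ≤ j) :
    ∀ z : K, ‖z‖ < R j →
      ‖deriv (fun t : K => fc p (Function.update c j t) z) (c j)‖ =
        ‖z‖ * ‖fc p c z‖ / R j ^ 2 := by
  haveI : CompleteSpace K := hK.complete
  have hna := hK.isNonarch
  intro z hz
  have hRj0 : (0 : ℝ) < R j := lt_of_le_of_lt (norm_nonneg z) hz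
  have hcj : ‖c j‖ = R j := hc j hj
  have hcj0 : c j ≠ 0 := by
    intro h
    rw [h, norm_zero] at hcj
    exact hRj0.ne' hcj.symm
  have hRpos : ∀ k, 1 ≤ k → (0 : ℝ) < R k := by
    intro k hk
    induction k, hk using Nat.le_induction with
    | base => exact lt_of_le_of_lt (Nat.cast_nonneg p) hR.1.2.1
    | succ n hn ih => exact ih.trans (hR.1.1 n hn)
  classical
  set b' : ℕ → K := fun n => if n = j - 1 then 1 else 1 - z / c (n + 1) with hb'def
  have hb'mult : Multipliable b' := by
    apply aux_multipliable hna
    have hbound : ∀ n, ‖b' n - 1‖ ≤ ‖z‖ / R (n + 1) := by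
      intro n
      by_cases h : n = j - 1
      · simp only [hb'def, if_pos h, sub_self, norm_zero]
        exact div_nonneg (norm_nonneg z) (hRpos (n + 1) (Nat.le_add_left 1 n)).le
      · simp only [hb'def, if_neg h]
        have he : (1 - z / c (n + 1)) - 1 = -(z / c (n + 1)) := by ring
        rw [he, norm_neg, norm_div, hc (n + 1) (Nat.le_add_left 1 n)]
    refine squeeze_zero (fun n => norm_nonneg _) hbound ?_
    exact Filter.Tendsto.const_div_atTop
      (hR.1.2.2.comp (Filter.tendsto_add_atTop_nat 1)) ‖z‖
  set Q : K := ∏' n, b' n with hQ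
  have key : ∀ t : K, fc p (Function.update c j t) z
      = z ^ p / (p : K) * (Q * (1 - z / t)) := by
    intro t
    have h1 : (fun n : ℕ => 1 - z / (Function.update c j t (n + 1)))
        = fun n => b' n * (if n = j - 1 then 1 - z / t else 1) := by
      funext n
      by_cases h : n = j - 1
      · have hnj : n + 1 = j := by omega
        simp only [hb'def, if_pos h, one_mul]
        rw [hnj, Function.update_self]
      · have hnj : n + 1 ≠ j := by omega
        simp [hb'def, h, Function.update_of_ne hnj]
    simp only [fc]
    rw [h1, Multipliable.tprod_mul hb'mult ⟨_, hasProd_ite_eq (j - 1) (1 - z / t)⟩, tprod_ite_eq]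
  have hfcc : fc p c z = z ^ p / (p : K) * (Q * (1 - z / c j)) := by
    have h := key (c j)
    rwa [Function.update_eq_self] at h
  have hfun : (fun t : K => fc p (Function.update c j t) z)
      = fun t => (z ^ p / (p : K) * Q) * (1 - z * t⁻¹) := by
    funext t
    rw [key t, div_eq_mul_inv z t]
    ring
  have hderiv : HasDerivAt (fun t : K => (z ^ p / (p : K) * Q) * (1 - z * t⁻¹))
      ((z ^ p / (p : K) * Q) * (z * ((c j) ^ 2)⁻¹)) (c j) := by
    have h1 : HasDerivAt (fun t : K => 1 - z * t⁻¹) (z * ((c j) ^ 2)⁻¹) (c j) := by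
      have h2 := (hasDerivAt_inv hcj0).const_mul z
      have h3 := h2.const_sub 1
      exact h3.congr_deriv (by ring)
    exact h1.const_mul _
  rw [hfun, hderiv.deriv, hfcc]
  have hz1 : ‖1 - z / c j‖ = 1 := by
    apply aux_norm_one_sub hna
    rw [norm_div, hcj]
    exact (div_lt_one hRj0).mpr hz
  simp only [norm_mul, norm_inv, norm_pow, hcj, hz1, mul_one]
  ring
end
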